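/- For any propositions φ, ψ, E, intuitionistic logic proves (¬_E¬φ → ¬_E¬_E ψ) → ¬_E¬_E(φ → ψ), i.e. (((¬φ → E) → ((ψ → E) → E)) → (((φ → ψ) → E) → E)), where ¬θ := θ → False. -/
import Mathlib

theorem stmt7 (φ ψ E : Prop) :
    (((φ → False) → E) → ((ψ → E) → E)) → (((φ → ψ) → E) → E) := by
  intro h k
  exact h (fun nφ => k (fun p => False.elim (nφ p))) (fun q => k (fun _ => q))
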